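/- arXiv:2404.06821 — 3 statements merged into one kernel-verified Lean document; each statement's English description precedes it below -/
import Mathlib

section
/- Let $\delta > 0$ and for $j \geq 1$ set $I_j := \int_{1/j}^{1/j+\delta} \left( \frac{1}{z} - \frac{1}{\sqrt{\delta^2 - 1/j^2 + 2z/j}} \right) dz$. Then $I_j = \ln(\delta j + 1) + O(1)$ as $j \to \infty$; more precisely, $|I_j - \ln(\delta j + 1)| \leq 2$ for all sufficiently large $j$. -/
open Real MeasureTheory intervalIntegral

theorem log_integral_asymptotics (δ : ℝ) (hδ : 0 < δ) :
    ∃ N : ℕ, ∀ j : ℕ, N ≤ j →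
      |(∫ z in (1 / (j : ℝ))..(1 / (j : ℝ) + δ),
          (1 / z - 1 / Real.sqrt (δ ^ 2 - 1 / (j : ℝ) ^ 2 + 2 * z / (j : ℝ)))) -
        Real.log (δ * (j : ℝ) + 1)| ≤ 2 := by
  refine ⟨1, fun j hj => ?_⟩
  have hj1 : (1:ℝ) ≤ (j:ℝ) := by exact_mod_cast hj
  have hjpos : (0:ℝ) < (j:ℝ) := by linarith
  have hjne : (j:ℝ) ≠ 0 := ne_of_gt hjpos
  set a : ℝ := 1 / (j:ℝ) with ha
  have hapos : 0 < a := by positivity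
  have haδ : a ≤ a + δ := by linarith
  have huIcc : Set.uIcc a (a + δ) = Set.Icc a (a + δ) := Set.uIcc_of_le haδ
  have hu : ∀ z ∈ Set.uIcc a (a + δ), 0 < δ ^ 2 - 1 / (j:ℝ) ^ 2 + 2 * z / (j:ℝ) := by
    intro z hz
    rw [huIcc] at hz
    have hza : a ≤ z := hz.1
    have h1 : 2 * a / (j:ℝ) ≤ 2 * z / (j:ℝ) := by gcongr
    have h2 : 2 * a / (j:ℝ) = 2 / (j:ℝ) ^ 2 := by rw [ha]; ring
    have h3 : (0:ℝ) < 1 / (j:ℝ) ^ 2 := by positivity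
    have h4 : (0:ℝ) < δ ^ 2 := by positivity
    have : δ ^ 2 - 1 / (j:ℝ) ^ 2 + 2 / (j:ℝ) ^ 2 = δ ^ 2 + 1 / (j:ℝ) ^ 2 := by ring
    linarith [h1, h2.symm ▸ h1]
  -- continuity / integrability
  have hcont1 : ContinuousOn (fun z : ℝ => 1 / z) (Set.uIcc a (a + δ)) := by
    apply ContinuousOn.div continuousOn_const continuousOn_id
    intro z hz
    rw [huIcc] at hz
    exact ne_of_gt (lt_of_lt_of_le hapos hz.1)
  have hcont2 : ContinuousOn
      (fun z : ℝ => 1 / Real.sqrt (δ ^ 2 - 1 / (j:ℝ) ^ 2 + 2 * z / (j:ℝ)))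
      (Set.uIcc a (a + δ)) := by
    apply ContinuousOn.div continuousOn_const
    · exact (Real.continuous_sqrt.comp (by continuity)).continuousOn
    · intro z hz
      exact (Real.sqrt_pos.2 (hu z hz)).ne'
  have hi1 : IntervalIntegrable (fun z : ℝ => 1 / z) volume a (a + δ) :=
    hcont1.intervalIntegrable
  have hi2 : IntervalIntegrable
      (fun z : ℝ => 1 / Real.sqrt (δ ^ 2 - 1 / (j:ℝ) ^ 2 + 2 * z / (j:ℝ)))
      volume a (a + δ) := hcont2.intervalIntegrable
  -- derivative of antiderivative of second term
  have hderiv : ∀ z ∈ Set.uIcc a (a + δ),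
      HasDerivAt (fun z => (j:ℝ) * Real.sqrt (δ ^ 2 - 1 / (j:ℝ) ^ 2 + 2 * z / (j:ℝ)))
        (1 / Real.sqrt (δ ^ 2 - 1 / (j:ℝ) ^ 2 + 2 * z / (j:ℝ))) z := by
    intro z hz
    have hpos := hu z hz
    have hsne : Real.sqrt (δ ^ 2 - 1 / (j:ℝ) ^ 2 + 2 * z / (j:ℝ)) ≠ 0 :=
      (Real.sqrt_pos.2 hpos).ne'
    have h1 : HasDerivAt (fun z : ℝ => δ ^ 2 - 1 / (j:ℝ) ^ 2 + 2 * z / (j:ℝ))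
        (2 / (j:ℝ)) z := by
      have h0 := (((hasDerivAt_id z).const_mul (2:ℝ)).div_const (j:ℝ)).const_add
        (δ ^ 2 - 1 / (j:ℝ) ^ 2)
      simp only [id_eq, mul_one] at h0
      exact h0
    have h2 := (Real.hasDerivAt_sqrt (ne_of_gt hpos)).comp z h1
    have h3 := h2.const_mul (j:ℝ)
    refine h3.congr_deriv ?_
    generalize Real.sqrt (δ ^ 2 - 1 / (j:ℝ) ^ 2 + 2 * z / (j:ℝ)) = t at hsne ⊢
    field_simp
  have hint2 : (∫ z in a..(a + δ),
      1 / Real.sqrt (δ ^ 2 - 1 / (j:ℝ) ^ 2 + 2 * z / (j:ℝ)))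
      = (j:ℝ) * Real.sqrt (δ ^ 2 - 1 / (j:ℝ) ^ 2 + 2 * (a + δ) / (j:ℝ))
        - (j:ℝ) * Real.sqrt (δ ^ 2 - 1 / (j:ℝ) ^ 2 + 2 * a / (j:ℝ)) :=
    intervalIntegral.integral_eq_sub_of_hasDerivAt hderiv hi2
  have hzero : (0:ℝ) ∉ Set.uIcc a (a + δ) := by
    rw [huIcc]
    intro h
    linarith [h.1]
  have hsplit : (∫ z in a..(a + δ),
      (1 / z - 1 / Real.sqrt (δ ^ 2 - 1 / (j:ℝ) ^ 2 + 2 * z / (j:ℝ))))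
      = (∫ z in a..(a + δ), 1 / z)
        - ∫ z in a..(a + δ), 1 / Real.sqrt (δ ^ 2 - 1 / (j:ℝ) ^ 2 + 2 * z / (j:ℝ)) :=
    intervalIntegral.integral_sub hi1 hi2
  have hlog : (∫ z in a..(a + δ), 1 / z) = Real.log (δ * (j:ℝ) + 1) := by
    rw [integral_one_div hzero]
    congr 1
    rw [ha]
    field_simp
    ring
  -- evaluate the sqrt values
  have hv1 : δ ^ 2 - 1 / (j:ℝ) ^ 2 + 2 * (a + δ) / (j:ℝ) = (δ + a) ^ 2 := by
    rw [ha]; field_simp; ring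
  have hsqrt1 : Real.sqrt (δ ^ 2 - 1 / (j:ℝ) ^ 2 + 2 * (a + δ) / (j:ℝ)) = δ + a := by
    rw [hv1, Real.sqrt_sq (by linarith)]
  have hv2 : δ ^ 2 - 1 / (j:ℝ) ^ 2 + 2 * a / (j:ℝ) = δ ^ 2 + a ^ 2 := by
    rw [ha]; field_simp; ring
  set s : ℝ := Real.sqrt (δ ^ 2 + a ^ 2) with hs
  have hs1 : δ ≤ s := by
    rw [hs]
    exact (Real.le_sqrt' hδ).2 (by nlinarith)
  have hs2 : s ≤ δ + a := by
    rw [hs]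
    calc Real.sqrt (δ ^ 2 + a ^ 2) ≤ Real.sqrt ((δ + a) ^ 2) :=
          Real.sqrt_le_sqrt (by nlinarith)
      _ = δ + a := Real.sqrt_sq (by linarith)
  have hja : (j:ℝ) * a = 1 := by rw [ha]; field_simp
  rw [hsplit, hlog, hint2, hsqrt1, hv2, ← hs]
  have hb1 : (j:ℝ) * δ ≤ (j:ℝ) * s := mul_le_mul_of_nonneg_left hs1 hjpos.le
  have hb2 : (j:ℝ) * s ≤ (j:ℝ) * (δ + a) := mul_le_mul_of_nonneg_left hs2 hjpos.le
  have hexp : (j:ℝ) * (δ + a) = (j:ℝ) * δ + 1 := by rw [mul_add, hja]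
  rw [abs_le]
  constructor <;> linarith
end

section
/- With $\Pi^0(x,y) = \frac{\alpha}{r} I + \frac{\beta}{r} \bar{x} \otimes \bar{x}$ where $r = |x-y|$ and $\bar{x} = (x-y)/|x-y|$, for any $b \in \mathbb{R}^3$ and $x \neq y$ one has the identity $\left[ \nabla_x(\Pi^0(x,y) b) \right] \left( \Pi^0(x,y) b \right) = \frac{1}{r^3}\left[ -\alpha^2 (\bar{x}\cdot b)\, b + \left( \alpha\beta - (3\alpha\beta + \beta^2)(\bar{x}\cdot b)^2 \right) \bar{x} \right]$, provided $|b| = 1$. -/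
open Real

/-- The Kelvin-type matrix `Π⁰(x,y)` applied to a fixed vector `b`. -/
noncomputable def kelvinField (α β : ℝ) (y b : EuclideanSpace ℝ (Fin 3))
    (x : EuclideanSpace ℝ (Fin 3)) : EuclideanSpace ℝ (Fin 3) :=
  (α / ‖x - y‖) • b + (β * (inner ℝ (x - y) b : ℝ) / ‖x - y‖ ^ 3) • (x - y)

/-- For a unit vector `b`,
`[∇ₓ(Π⁰(x,y)b)](Π⁰(x,y)b) = r⁻³ [ -α²(x̄·b) b + (αβ - (3αβ+β²)(x̄·b)²) x̄ ]`. -/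
theorem jacobian_kelvin_applied_to_itself (α β : ℝ)
    (x y b : EuclideanSpace ℝ (Fin 3)) (hxy : x ≠ y) (hb : ‖b‖ = 1) :
    fderiv ℝ (kelvinField α β y b) x (kelvinField α β y b x) =
      (‖x - y‖ ^ 3)⁻¹ •
        ((-(α ^ 2) * (inner ℝ (‖x - y‖⁻¹ • (x - y)) b : ℝ)) • b +
          (α * β - (3 * α * β + β ^ 2) * (inner ℝ (‖x - y‖⁻¹ • (x - y)) b : ℝ) ^ 2) •
            (‖x - y‖⁻¹ • (x - y))) := by
  have hu0 : x - y ≠ 0 := sub_ne_zero.2 hxy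
  have hr0 : ‖x - y‖ ≠ 0 := norm_ne_zero_iff.2 hu0
  have hid : HasFDerivAt (fun z : EuclideanSpace ℝ (Fin 3) => z - y)
      (ContinuousLinearMap.id ℝ (EuclideanSpace ℝ (Fin 3))) x := (hasFDerivAt_id x).sub_const y
  have hq0 : (inner ℝ (x - y) (x - y) : ℝ) ≠ 0 := inner_self_ne_zero.2 hu0
  have hnorm := (HasFDerivAt.inner ℝ hid hid).sqrt hq0
  simp only [← norm_eq_sqrt_real_inner] at hnorm
  have hinv := (hasDerivAt_inv hr0).comp_hasFDerivAt x hnorm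
  have hcube := (hasDerivAt_pow 3 ‖x - y‖).comp_hasFDerivAt x hnorm
  have hcubeinv := (hasDerivAt_inv (pow_ne_zero 3 hr0)).comp_hasFDerivAt x hcube
  have hp := HasFDerivAt.inner ℝ hid (hasFDerivAt_const b x)
  simp only [Function.comp_def] at hinv hcube hcubeinv
  have hF := ((hinv.const_mul α).smul_const b).add (((hp.const_mul β).mul hcubeinv).smul hid)
  rw [show kelvinField α β y b = fun z => (α * ‖z - y‖⁻¹) • b +
      ((β * (inner ℝ (z - y) b : ℝ)) * ((‖z - y‖ ^ 3)⁻¹)) • (z - y) from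
    funext fun z => by simp [kelvinField, div_eq_mul_inv]]
  rw [(show HasFDerivAt (fun z : EuclideanSpace ℝ (Fin 3) => (α * ‖z - y‖⁻¹) • b +
      ((β * (inner ℝ (z - y) b : ℝ)) * ((‖z - y‖ ^ 3)⁻¹)) • (z - y)) _ x from hF).fderiv]
  simp only [ContinuousLinearMap.add_apply, ContinuousLinearMap.coe_smul',
    ContinuousLinearMap.smul_apply, ContinuousLinearMap.smulRight_apply,
    ContinuousLinearMap.comp_apply, ContinuousLinearMap.prod_apply,
    ContinuousLinearMap.id_apply, fderivInnerCLM_apply, Pi.smul_apply, Pi.mul_apply,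
    ContinuousLinearMap.zero_apply, inner_zero_right, add_zero,
    inner_add_right, inner_add_left, real_inner_smul_right, real_inner_smul_left,
    real_inner_self_eq_norm_sq, real_inner_comm b (x - y), hb, smul_eq_mul]
  match_scalars <;> (push_cast; field_simp; ring)
end

section
/- With $\Pi^0(x,y) = \frac{\alpha}{r} I + \frac{\beta}{r} \bar{x} \otimes \bar{x}$, $r = |x-y|$, $\bar{x} = (x-y)/|x-y|$: if $b = \bar{x}$ (the unit vector from $y$ to $x$), then $\left[ \nabla_x(\Pi^0(x,y) b) \right] \left( \Pi^0(x,y) b \right) = -\frac{(\alpha+\beta)^2}{r^3}\, \bar{x}$. -/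
open Real

local notation "E3" => EuclideanSpace ℝ (Fin 3)

set_option maxHeartbeats 1000000 in
/-- If `b = x̄` is the unit vector from `y` to `x`, then
`[∇ₓ(Π⁰(x,y)b)](Π⁰(x,y)b) = -(α+β)²/r³ • x̄`. -/
theorem jacobian_kelvin_radial_direction (α β : ℝ)
    (x y b : EuclideanSpace ℝ (Fin 3)) (hxy : x ≠ y)
    (hb : b = ‖x - y‖⁻¹ • (x - y)) :
    fderiv ℝ (kelvinField α β y b) x (kelvinField α β y b x) =
      (-(α + β) ^ 2 / ‖x - y‖ ^ 3) • (‖x - y‖⁻¹ • (x - y)) := by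
  subst hb
  set u : EuclideanSpace ℝ (Fin 3) := x - y with hu_def
  have hu : u ≠ 0 := sub_ne_zero.2 hxy
  have hr : (0:ℝ) < ‖u‖ := norm_pos_iff.2 hu
  set r : ℝ := ‖u‖ with hr_def
  set b : EuclideanSpace ℝ (Fin 3) := r⁻¹ • u with hb_def
  have hid : HasFDerivAt (fun z : E3 => z - y) (ContinuousLinearMap.id ℝ E3) x :=
    (hasFDerivAt_id x).sub_const y
  have hnorm : HasFDerivAt (fun z : E3 => ‖z - y‖) (r⁻¹ • innerSL ℝ u) x := by
    have hsqrt := hid.norm_sq.sqrt (by positivity : ‖x - y‖ ^ 2 ≠ 0)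
    have hfun : (fun z : E3 => √(‖z - y‖ ^ 2)) = fun z => ‖z - y‖ :=
      funext fun z => Real.sqrt_sq (norm_nonneg _)
    rw [hfun] at hsqrt
    refine hsqrt.congr_fderiv ?_
    ext v
    rw [Real.sqrt_sq hr.le]
    simp only [ContinuousLinearMap.smul_apply, ContinuousLinearMap.comp_apply,
      ContinuousLinearMap.id_apply, smul_eq_mul, nsmul_eq_mul, Nat.cast_ofNat]
    field_simp
    simp only [hu_def, PiLp.sub_apply, sub_mul, Finset.sum_sub_distrib]
  have hs1 : HasFDerivAt (fun z : E3 => α / ‖z - y‖)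
      ((α * -(r ^ 2)⁻¹) • (r⁻¹ • innerSL ℝ u)) x := by
    have h := ((hasDerivAt_inv hr.ne').const_mul α).comp_hasFDerivAt x hnorm
    simpa [Function.comp_def, div_eq_mul_inv] using h
  have hg : HasFDerivAt (fun z : E3 => (inner ℝ (z - y) b : ℝ))
      ((innerSL ℝ b).comp (ContinuousLinearMap.id ℝ E3)) x := by
    have h := (innerSL ℝ b).hasFDerivAt.comp x hid
    have heq : (fun z : E3 => innerSL ℝ b (z - y)) = fun z : E3 => (inner ℝ (z - y) b : ℝ) := by
      funext z
      simp only [innerSL_apply_apply]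
      exact (real_inner_comm b (z - y)).symm
    rwa [← heq]
  have hinv3 : HasFDerivAt (fun z : E3 => (‖z - y‖ ^ 3)⁻¹)
      ((-(3 * r ^ 2) / (r ^ 3) ^ 2) • (r⁻¹ • innerSL ℝ u)) x := by
    have hp : HasDerivAt (fun t : ℝ => (t ^ 3)⁻¹) (-(3 * r ^ 2) / (r ^ 3) ^ 2) r := by
      refine ((hasDerivAt_pow 3 r).inv (pow_ne_zero 3 hr.ne')).congr_deriv ?_
      norm_num
    have h := hp.comp_hasFDerivAt x hnorm
    exact h
  have hs2 : HasFDerivAt (fun z : E3 => β * (inner ℝ (z - y) b : ℝ) / ‖z - y‖ ^ 3)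
      ((β * (inner ℝ u b : ℝ)) • ((-(3 * r ^ 2) / (r ^ 3) ^ 2) • (r⁻¹ • innerSL ℝ u)) +
        (r ^ 3)⁻¹ • (β • ((innerSL ℝ b).comp (ContinuousLinearMap.id ℝ E3)))) x := by
    have h := (hg.const_mul β).mul hinv3
    simpa [div_eq_mul_inv, mul_comm, ← hu_def, ← hr_def, Pi.mul_def] using h
  have hF := (hs1.smul (hasFDerivAt_const b x)).add (hs2.smul hid)
  have hFk : HasFDerivAt (kelvinField α β y b)
      (((α / ‖u‖) • (0 : EuclideanSpace ℝ (Fin 3) →L[ℝ] EuclideanSpace ℝ (Fin 3)) +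
          ((α * -(r ^ 2)⁻¹) • (r⁻¹ • innerSL ℝ u)).smulRight b) +
        ((β * (inner ℝ u b : ℝ) / ‖u‖ ^ 3) • ContinuousLinearMap.id ℝ E3 +
          ((β * (inner ℝ u b : ℝ)) • ((-(3 * r ^ 2) / (r ^ 3) ^ 2) • (r⁻¹ • innerSL ℝ u)) +
            (r ^ 3)⁻¹ • (β • ((innerSL ℝ b).comp
              (ContinuousLinearMap.id ℝ E3)))).smulRight u)) x := hF
  rw [hFk.fderiv]
  have hib : (inner ℝ u b : ℝ) = r := by
    rw [hb_def, real_inner_smul_right, real_inner_self_eq_norm_sq, ← hr_def]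
    field_simp
  have hv : kelvinField α β y b x = ((α + β) / r ^ 2) • u := by
    simp only [kelvinField, ← hu_def, ← hr_def, hib, hb_def, smul_smul, ← add_smul]
    congr 1
    field_simp
    rw [one_div, ← hb_def, hib]
    ring
  rw [hv]
  have hrb : (inner ℝ u (((α + β) / r ^ 2) • u) : ℝ) = (α + β) := by
    rw [real_inner_smul_right, real_inner_self_eq_norm_sq, ← hr_def]
    field_simp
  simp only [ContinuousLinearMap.add_apply, ContinuousLinearMap.smul_apply,
    ContinuousLinearMap.smulRight_apply, ContinuousLinearMap.comp_apply,
    ContinuousLinearMap.id_apply, ContinuousLinearMap.zero_apply, innerSL_apply_apply,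
    hrb, hb_def, smul_smul, smul_zero, zero_add, smul_add]
  rw [← hr_def]
  have h1 : (inner ℝ u (r⁻¹ • u) : ℝ) = r := by
    rw [real_inner_smul_right, real_inner_self_eq_norm_sq, ← hr_def]
    field_simp
  have h2 : (inner ℝ (r⁻¹ • u) (((α + β) / r ^ 2) • u) : ℝ) = (α + β) / r := by
    rw [real_inner_smul_left, real_inner_smul_right, real_inner_self_eq_norm_sq, ← hr_def]
    field_simp
    try ring
  simp only [smul_eq_mul, h1, h2]
  rw [← add_smul, ← add_smul]
  congr 1
  field_simp
  ring
end
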